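/- arXiv:2507.01613 — 2 statements merged into one kernel-verified Lean document; each statement's English description precedes it below -/
import Mathlib

section
/- Fix an integer K ≥ 2. For every random variable X supported on {1,…,K} with positive variance, SNR(X) := (E X)²/Var(X) ≥ 4K/(K−1)², with equality if and only if X takes value 1 with probability K/(K+1) and value K with probability 1/(K+1). -/
open Finset

/-- For `K ≥ 2` and any random variable supported on `{1, …, K}`
(described by its probability mass `p`) with positive variance,
`SNR(X) = (E X)²/Var(X) ≥ 4K/(K−1)²`, with equality if and only if `X` takes
value `1` with probability `K/(K+1)` and value `K` with probability `1/(K+1)`. -/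
theorem min_snr_unconstrained
    (K : ℕ) (hK : 2 ≤ K) (p : ℕ → ℝ)
    (hp0 : ∀ k ∈ Finset.Icc 1 K, 0 ≤ p k)
    (hp1 : (∑ k ∈ Finset.Icc 1 K, p k) = 1)
    (hvar : 0 < (∑ k ∈ Finset.Icc 1 K, (k : ℝ) ^ 2 * p k)
        - (∑ k ∈ Finset.Icc 1 K, (k : ℝ) * p k) ^ 2) :
    4 * (K : ℝ) / ((K : ℝ) - 1) ^ 2
      ≤ (∑ k ∈ Finset.Icc 1 K, (k : ℝ) * p k) ^ 2 /
          ((∑ k ∈ Finset.Icc 1 K, (k : ℝ) ^ 2 * p k)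
            - (∑ k ∈ Finset.Icc 1 K, (k : ℝ) * p k) ^ 2) ∧
    ((∑ k ∈ Finset.Icc 1 K, (k : ℝ) * p k) ^ 2 /
          ((∑ k ∈ Finset.Icc 1 K, (k : ℝ) ^ 2 * p k)
            - (∑ k ∈ Finset.Icc 1 K, (k : ℝ) * p k) ^ 2)
        = 4 * (K : ℝ) / ((K : ℝ) - 1) ^ 2
      ↔ (p 1 = (K : ℝ) / ((K : ℝ) + 1) ∧ p K = 1 / ((K : ℝ) + 1) ∧
          ∀ k ∈ Finset.Icc 1 K, k ≠ 1 → k ≠ K → p k = 0)) := by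
  have hKR : (2:ℝ) ≤ (K:ℝ) := by exact_mod_cast hK
  have hK1 : (1:ℝ) < (K:ℝ) := by linarith
  have hKm1pos : (0:ℝ) < (K:ℝ) - 1 := by linarith
  have hden2 : (0:ℝ) < ((K:ℝ) - 1)^2 := by positivity
  have hKp1 : (0:ℝ) < (K:ℝ) + 1 := by linarith
  set E1 := ∑ k ∈ Finset.Icc 1 K, (k : ℝ) * p k with hE1def
  set E2 := ∑ k ∈ Finset.Icc 1 K, (k : ℝ) ^ 2 * p k with hE2def
  have hterm : ∀ k ∈ Finset.Icc 1 K, 0 ≤ (((K:ℝ)+1) * k - K - (k:ℝ)^2) * p k := by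
    intro k hk
    obtain ⟨hk1, hkK⟩ := Finset.mem_Icc.mp hk
    have h1 : (1:ℝ) ≤ (k:ℝ) := by exact_mod_cast hk1
    have h2 : (k:ℝ) ≤ (K:ℝ) := by exact_mod_cast hkK
    have hp := hp0 k hk
    nlinarith [mul_nonneg (mul_nonneg (sub_nonneg.mpr h1) (sub_nonneg.mpr h2)) hp]
  have hsum : ∑ k ∈ Finset.Icc 1 K, (((K:ℝ)+1) * k - K - (k:ℝ)^2) * p k
      = ((K:ℝ)+1) * E1 - K - E2 := by
    calc ∑ k ∈ Finset.Icc 1 K, (((K:ℝ)+1) * k - K - (k:ℝ)^2) * p k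
        = ∑ k ∈ Finset.Icc 1 K,
            (((K:ℝ)+1) * ((k:ℝ) * p k) - (K:ℝ) * p k - (k:ℝ)^2 * p k) := by
          apply Finset.sum_congr rfl; intro k _; ring
      _ = (∑ k ∈ Finset.Icc 1 K, ((K:ℝ)+1) * ((k:ℝ) * p k))
            - (∑ k ∈ Finset.Icc 1 K, (K:ℝ) * p k)
            - (∑ k ∈ Finset.Icc 1 K, (k:ℝ)^2 * p k) := by
          rw [Finset.sum_sub_distrib, Finset.sum_sub_distrib]
      _ = ((K:ℝ)+1) * E1 - K - E2 := by
          rw [← Finset.mul_sum, ← Finset.mul_sum, hp1, ← hE1def, ← hE2def, mul_one]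
  have hkey : 0 ≤ ((K:ℝ)+1) * E1 - K - E2 := by
    rw [← hsum]; exact Finset.sum_nonneg hterm
  constructor
  · rw [div_le_div_iff₀ hden2 hvar]
    nlinarith [sq_nonneg (((K:ℝ)+1) * E1 - 2 * K)]
  · constructor
    · intro heq
      rw [div_eq_div_iff hvar.ne' hden2.ne'] at heq
      have hz2 : (((K:ℝ)+1) * E1 - 2 * K)^2 ≤ 0 := by nlinarith
      have hz : ((K:ℝ)+1) * E1 - 2 * K = 0 := by
        have h0 : (((K:ℝ)+1) * E1 - 2 * K)^2 = 0 :=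
          le_antisymm hz2 (sq_nonneg _)
        exact pow_eq_zero_iff (by norm_num) |>.mp h0
      have hE1val : ((K:ℝ)+1) * E1 = 2 * K := by linarith
      have hE2eq : E2 = ((K:ℝ)+1) * E1 - K := by
        have h4K : (4:ℝ) * K ≠ 0 := by positivity
        have h : (4:ℝ) * K * E2 = 4 * K * (((K:ℝ)+1) * E1 - K) := by
          linear_combination -heq + (((K:ℝ)+1) * E1 - 2 * (K:ℝ)) * hz
        exact mul_left_cancel₀ h4K h
      have hzero2 : ∑ k ∈ Finset.Icc 1 K, (((K:ℝ)+1) * k - K - (k:ℝ)^2) * p k = 0 := by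
        rw [hsum, hE2eq]; ring
      have hmid : ∀ k ∈ Finset.Icc 1 K, k ≠ 1 → k ≠ K → p k = 0 := by
        intro k hk hne1 hneK
        have hall := (Finset.sum_eq_zero_iff_of_nonneg hterm).mp hzero2 k hk
        obtain ⟨hk1, hkK⟩ := Finset.mem_Icc.mp hk
        have h1 : (2:ℝ) ≤ (k:ℝ) := by exact_mod_cast (by omega : 2 ≤ k)
        have h2 : (k:ℝ) + 1 ≤ (K:ℝ) := by exact_mod_cast (by omega : k + 1 ≤ K)
        have hpos : 0 < ((K:ℝ)+1) * k - K - (k:ℝ)^2 := by nlinarith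
        rcases mul_eq_zero.mp hall with h | h
        · exact absurd h (ne_of_gt hpos)
        · exact h
      have hsub : ({1, K} : Finset ℕ) ⊆ Finset.Icc 1 K := by
        intro x hx
        simp only [Finset.mem_insert, Finset.mem_singleton] at hx
        rcases hx with rfl | rfl <;> rw [Finset.mem_Icc] <;> omega
      have hred : ∀ f : ℕ → ℝ, ∑ k ∈ Finset.Icc 1 K, f k * p k = f 1 * p 1 + f K * p K := by
        intro f
        rw [← Finset.sum_subset hsub (by
          intro x hx hnx
          simp only [Finset.mem_insert, Finset.mem_singleton, not_or] at hnx
          rw [hmid x hx hnx.1 hnx.2, mul_zero])]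
        rw [Finset.sum_pair (by omega : (1:ℕ) ≠ K)]
      have hone : p 1 + p K = 1 := by
        have h := hred (fun _ => 1)
        simp only [one_mul] at h
        rw [← h]; exact hp1
      have hE1red : E1 = p 1 + (K:ℝ) * p K := by
        rw [hE1def]
        have h := hred (fun k => (k:ℝ))
        simpa using h
      have hKm1 : ((K:ℝ) - 1) ≠ 0 := hKm1pos.ne'
      have hpK : p K = 1 / ((K:ℝ)+1) := by
        have key : ((K:ℝ)-1) * (p K * ((K:ℝ)+1)) = ((K:ℝ)-1) * 1 := by
          rw [hE1red] at hE1val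
          linear_combination hE1val - ((K:ℝ)+1) * hone
        have h := mul_left_cancel₀ hKm1 key
        field_simp
        linarith
      have hp1v : p 1 = (K:ℝ) / ((K:ℝ)+1) := by
        rw [hpK] at hone
        field_simp
        field_simp at hone
        linarith
      exact ⟨hp1v, hpK, hmid⟩
    · rintro ⟨h1v, hKv, hz⟩
      have hsub : ({1, K} : Finset ℕ) ⊆ Finset.Icc 1 K := by
        intro x hx
        simp only [Finset.mem_insert, Finset.mem_singleton] at hx
        rcases hx with rfl | rfl <;> rw [Finset.mem_Icc] <;> omega
      have hred : ∀ f : ℕ → ℝ, ∑ k ∈ Finset.Icc 1 K, f k * p k = f 1 * p 1 + f K * p K := by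
        intro f
        rw [← Finset.sum_subset hsub (by
          intro x hx hnx
          simp only [Finset.mem_insert, Finset.mem_singleton, not_or] at hnx
          rw [hz x hx hnx.1 hnx.2, mul_zero])]
        rw [Finset.sum_pair (by omega : (1:ℕ) ≠ K)]
      have hKp1' : ((K:ℝ)+1) ≠ 0 := hKp1.ne'
      have hE1v : E1 = 2 * (K:ℝ) / ((K:ℝ)+1) := by
        rw [hE1def]
        have h := hred (fun k => (k:ℝ))
        simp only [Nat.cast_one, one_mul] at h
        rw [h, h1v, hKv]
        field_simp
        ring
      have hE2v : E2 = (K:ℝ) := by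
        rw [hE2def]
        have h := hred (fun k => (k:ℝ)^2)
        simp only [Nat.cast_one, one_pow, one_mul] at h
        rw [h, h1v, hKv]
        field_simp
        ring
      rw [div_eq_div_iff hvar.ne' hden2.ne', hE1v, hE2v]
      field_simp
      ring
end

section
/- Fix an integer K ≥ 2. Among all random variables X supported on {1,…,K} with non-increasing probability mass function (P(X=1) ≥ P(X=2) ≥ … ≥ P(X=K)) and positive variance, the signal-to-noise ratio satisfies SNR(X) = (E X)²/Var(X) ≥ 24(K+1)/(4K² − 4K + 1), with equality if and only if P(X = 1) = (2K² + K + 2)/(2K² + 5K) and P(X = k) = 2(2K−1)/(K(K−1)(2K+5)) for every k ∈ {2,…,K}. -/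
open Finset

lemma sum_Icc_cast (K : ℕ) : ∑ k ∈ Finset.Icc 1 K, (k : ℝ) = K * (K + 1) / 2 := by
  induction K with
  | zero => simp
  | succ n ih =>
    rw [Finset.sum_Icc_succ_top (by omega), ih]
    push_cast; ring

lemma sum_Icc_sq (K : ℕ) :
    ∑ k ∈ Finset.Icc 1 K, (k : ℝ) ^ 2 = K * (K + 1) * (2 * K + 1) / 6 := by
  induction K with
  | zero => simp
  | succ n ih =>
    rw [Finset.sum_Icc_succ_top (by omega), ih]
    push_cast; ring

lemma abel_aux (q f : ℕ → ℝ) (N : ℕ) :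
    ∑ k ∈ Finset.Icc 1 (N + 1), q k * f k
      = (∑ j ∈ Finset.Icc 1 N, (q j - q (j + 1)) * (∑ k ∈ Finset.Icc 1 j, f k))
        + q (N + 1) * (∑ k ∈ Finset.Icc 1 (N + 1), f k) := by
  induction N with
  | zero => simp
  | succ n ih =>
    rw [Finset.sum_Icc_succ_top (a := 1) (b := n + 1) (by omega) (fun k => q k * f k),
      ih, Finset.sum_Icc_succ_top (a := 1) (b := n) (by omega)
        (fun j => (q j - q (j + 1)) * (∑ k ∈ Finset.Icc 1 j, f k)),
      Finset.sum_Icc_succ_top (a := 1) (b := n + 1) (by omega) f]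
    ring

lemma abel_core (c m : ℝ) (q : ℕ → ℝ) (K : ℕ) (hK : 1 ≤ K) :
    ∑ k ∈ Finset.Icc 1 K,
        q k * (2 * (1 + c) * m * (k : ℝ) - c * (k : ℝ) ^ 2 - (1 + c) * m ^ 2)
      = (∑ j ∈ Finset.Icc 1 (K - 1), (q j - q (j + 1)) *
          (∑ k ∈ Finset.Icc 1 j,
            (2 * (1 + c) * m * (k : ℝ) - c * (k : ℝ) ^ 2 - (1 + c) * m ^ 2)))
        + q K * (∑ k ∈ Finset.Icc 1 K,
            (2 * (1 + c) * m * (k : ℝ) - c * (k : ℝ) ^ 2 - (1 + c) * m ^ 2)) := by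
  obtain ⟨N, rfl⟩ : ∃ N, K = N + 1 := ⟨K - 1, by omega⟩
  exact abel_aux q (fun k => 2 * (1 + c) * m * (k : ℝ) - c * (k : ℝ) ^ 2 - (1 + c) * m ^ 2) N

lemma phi_sum (c m : ℝ) (j : ℕ) :
    ∑ k ∈ Finset.Icc 1 j,
        (2 * (1 + c) * m * (k : ℝ) - c * (k : ℝ) ^ 2 - (1 + c) * m ^ 2)
      = (1 + c) * m * ((j : ℝ) * (j + 1)) - c * ((j : ℝ) * (j + 1) * (2 * j + 1)) / 6
        - (1 + c) * m ^ 2 * j := by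
  have h3 : ∑ _k ∈ Finset.Icc 1 j, ((1 + c) * m ^ 2) = (j : ℝ) * ((1 + c) * m ^ 2) := by
    rw [Finset.sum_const, Nat.card_Icc, nsmul_eq_mul]
    norm_num
  rw [Finset.sum_sub_distrib, Finset.sum_sub_distrib, ← Finset.mul_sum, ← Finset.mul_sum,
    h3, sum_Icc_cast, sum_Icc_sq]
  ring

set_option maxHeartbeats 2000000 in
/-- For `K ≥ 2` and any random variable supported on `{1, …, K}`
with non-increasing probability mass function and positive variance,
`SNR(X) = (E X)²/Var(X) ≥ 24(K+1)/(4K² − 4K + 1)`, with equality if and only if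
`P(X = 1) = (2K² + K + 2)/(2K² + 5K)` and
`P(X = k) = 2(2K−1)/(K(K−1)(2K+5))` for every `k ∈ {2, …, K}`. -/
theorem min_snr_nonincreasing
    (K : ℕ) (hK : 2 ≤ K) (p : ℕ → ℝ)
    (hp0 : ∀ k ∈ Finset.Icc 1 K, 0 ≤ p k)
    (hp1 : (∑ k ∈ Finset.Icc 1 K, p k) = 1)
    (hmono : ∀ k ∈ Finset.Icc 1 (K - 1), p (k + 1) ≤ p k)
    (hvar : 0 < (∑ k ∈ Finset.Icc 1 K, (k : ℝ) ^ 2 * p k)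
        - (∑ k ∈ Finset.Icc 1 K, (k : ℝ) * p k) ^ 2) :
    24 * ((K : ℝ) + 1) / (4 * (K : ℝ) ^ 2 - 4 * (K : ℝ) + 1)
      ≤ (∑ k ∈ Finset.Icc 1 K, (k : ℝ) * p k) ^ 2 /
          ((∑ k ∈ Finset.Icc 1 K, (k : ℝ) ^ 2 * p k)
            - (∑ k ∈ Finset.Icc 1 K, (k : ℝ) * p k) ^ 2) ∧
    ((∑ k ∈ Finset.Icc 1 K, (k : ℝ) * p k) ^ 2 /
          ((∑ k ∈ Finset.Icc 1 K, (k : ℝ) ^ 2 * p k)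
            - (∑ k ∈ Finset.Icc 1 K, (k : ℝ) * p k) ^ 2)
        = 24 * ((K : ℝ) + 1) / (4 * (K : ℝ) ^ 2 - 4 * (K : ℝ) + 1)
      ↔ (p 1 = (2 * (K : ℝ) ^ 2 + (K : ℝ) + 2) / (2 * (K : ℝ) ^ 2 + 5 * (K : ℝ)) ∧
          ∀ k ∈ Finset.Icc 2 K,
            p k = 2 * (2 * (K : ℝ) - 1) /
              ((K : ℝ) * ((K : ℝ) - 1) * (2 * (K : ℝ) + 5)))) := by
  set x : ℝ := (K : ℝ) with hxdef
  set μ : ℝ := ∑ k ∈ Finset.Icc 1 K, (k : ℝ) * p k with hμdef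
  set S : ℝ := ∑ k ∈ Finset.Icc 1 K, (k : ℝ) ^ 2 * p k with hSdef
  set c : ℝ := 24 * (x + 1) / (4 * x ^ 2 - 4 * x + 1) with hcdef
  set m : ℝ := 4 * (x + 1) / (2 * x + 5) with hmdef
  clear_value x μ S c m
  have hx2 : (2 : ℝ) ≤ x := by rw [hxdef]; exact_mod_cast hK
  have hden : (0 : ℝ) < 4 * x ^ 2 - 4 * x + 1 := by nlinarith
  have hden2 : (0 : ℝ) < 2 * x + 5 := by linarith
  have hcpos : 0 < c := by rw [hcdef]; exact div_pos (by linarith) hden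
  have h1c : (0 : ℝ) < 1 + c := by linarith
  -- closed form for the partial sums Φ j
  have hΦ : ∀ j : ℕ,
      (∑ k ∈ Finset.Icc 1 j,
        (2 * (1 + c) * m * (k : ℝ) - c * (k : ℝ) ^ 2 - (1 + c) * m ^ 2))
      = c / 3 * (j : ℝ) * ((j : ℝ) - 1) * (x - (j : ℝ)) := by
    intro j
    rw [phi_sum, hcdef, hmdef]
    have hne4 : 4 * x ^ 2 - 4 * x + 1 ≠ 0 := ne_of_gt hden
    have hne3 : 2 * x + 5 ≠ 0 := ne_of_gt hden2
    have hne5 : x * 4 * (x - 1) + 1 ≠ 0 := by nlinarith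
    have hne6 : x * 2 + 5 ≠ 0 := by linarith
    field_simp
    ring
  have hcore := abel_core c m p K (by omega)
  have hsum_eq : ∑ j ∈ Finset.Icc 1 (K - 1), (p j - p (j + 1)) *
        (∑ k ∈ Finset.Icc 1 j,
          (2 * (1 + c) * m * (k : ℝ) - c * (k : ℝ) ^ 2 - (1 + c) * m ^ 2))
      = ∑ j ∈ Finset.Icc 1 (K - 1), (p j - p (j + 1)) *
          (c / 3 * (j : ℝ) * ((j : ℝ) - 1) * (x - (j : ℝ))) :=
    Finset.sum_congr rfl (fun j _ => by rw [hΦ j])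
  have hlin : ∑ k ∈ Finset.Icc 1 K,
        p k * (2 * (1 + c) * m * (k : ℝ) - c * (k : ℝ) ^ 2 - (1 + c) * m ^ 2)
      = 2 * (1 + c) * m * μ - c * S - (1 + c) * m ^ 2 := by
    have e1 : ∀ k ∈ Finset.Icc 1 K,
        p k * (2 * (1 + c) * m * (k : ℝ) - c * (k : ℝ) ^ 2 - (1 + c) * m ^ 2)
          = 2 * (1 + c) * m * ((k : ℝ) * p k) - c * ((k : ℝ) ^ 2 * p k)
            - (1 + c) * m ^ 2 * p k := fun k _ => by ring
    rw [Finset.sum_congr rfl e1, Finset.sum_sub_distrib, Finset.sum_sub_distrib,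
      ← Finset.mul_sum, ← Finset.mul_sum, ← Finset.mul_sum, hp1, ← hμdef, ← hSdef]
    ring
  have hxK : x - (K : ℝ) = 0 := by rw [hxdef]; ring
  have hE : (1 + c) * μ ^ 2 - c * S
      = (1 + c) * (μ - m) ^ 2 + ∑ j ∈ Finset.Icc 1 (K - 1), (p j - p (j + 1)) *
          (c / 3 * (j : ℝ) * ((j : ℝ) - 1) * (x - (j : ℝ))) := by
    rw [hsum_eq, hΦ K, hxK] at hcore
    rw [hlin] at hcore
    linear_combination hcore
  have hterm_nonneg : ∀ j ∈ Finset.Icc 1 (K - 1),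
      0 ≤ (p j - p (j + 1)) * (c / 3 * (j : ℝ) * ((j : ℝ) - 1) * (x - (j : ℝ))) := by
    intro j hj
    have hj' := Finset.mem_Icc.1 hj
    have h1 : 0 ≤ p j - p (j + 1) := by linarith [hmono j hj]
    have hj1 : (1 : ℝ) ≤ (j : ℝ) := by exact_mod_cast hj'.1
    have hjK : (j : ℝ) + 1 ≤ x := by
      rw [hxdef]
      have : j + 1 ≤ K := by omega
      exact_mod_cast this
    have h2 : 0 ≤ c / 3 * (j : ℝ) * ((j : ℝ) - 1) * (x - (j : ℝ)) := by
      apply mul_nonneg (mul_nonneg (mul_nonneg (by linarith) (by linarith)) (by linarith))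
      linarith
    exact mul_nonneg h1 h2
  have hSnn : 0 ≤ ∑ j ∈ Finset.Icc 1 (K - 1), (p j - p (j + 1)) *
      (c / 3 * (j : ℝ) * ((j : ℝ) - 1) * (x - (j : ℝ))) :=
    Finset.sum_nonneg hterm_nonneg
  have hsqnn : 0 ≤ (1 + c) * (μ - m) ^ 2 := mul_nonneg h1c.le (sq_nonneg _)
  have hmain : c * S ≤ (1 + c) * μ ^ 2 := by linarith
  -- shared sum-splitting facts
  have hsplit : Finset.Icc 1 K = insert 1 (Finset.Icc 2 K) := by
    ext a; simp only [Finset.mem_Icc, Finset.mem_insert]; omega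
  have h1notin : (1 : ℕ) ∉ Finset.Icc 2 K := by simp
  have hsumk2 : ∑ k ∈ Finset.Icc 2 K, (k : ℝ) = x * (x + 1) / 2 - 1 := by
    have h := sum_Icc_cast K
    rw [hsplit, Finset.sum_insert h1notin] at h
    rw [hxdef]; push_cast at h ⊢; linarith
  have hsumk2sq : ∑ k ∈ Finset.Icc 2 K, (k : ℝ) ^ 2
      = x * (x + 1) * (2 * x + 1) / 6 - 1 := by
    have h := sum_Icc_sq K
    rw [hsplit, Finset.sum_insert h1notin] at h
    rw [hxdef]; push_cast at h ⊢; linarith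
  have hxpos : (0 : ℝ) < x := by linarith
  have hx1 : (0 : ℝ) < x - 1 := by linarith
  constructor
  · rw [le_div_iff₀ hvar]
    nlinarith
  constructor
  · -- equality implies the explicit distribution
    intro heq
    rw [div_eq_iff (ne_of_gt hvar)] at heq
    have hE0 : (1 + c) * μ ^ 2 - c * S = 0 := by linear_combination heq
    have hsum0 : (1 + c) * (μ - m) ^ 2 + ∑ j ∈ Finset.Icc 1 (K - 1), (p j - p (j + 1)) *
        (c / 3 * (j : ℝ) * ((j : ℝ) - 1) * (x - (j : ℝ))) = 0 := by linarith
    have hB : (1 + c) * (μ - m) ^ 2 = 0 := le_antisymm (by linarith) hsqnn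
    have hmm : μ = m := by
      rcases mul_eq_zero.1 hB with h | h
      · linarith
      · have := pow_eq_zero_iff (n := 2) (by norm_num) |>.1 h
        linarith [sub_eq_zero.1 this]
    have hSzz : ∑ j ∈ Finset.Icc 1 (K - 1), (p j - p (j + 1)) *
        (c / 3 * (j : ℝ) * ((j : ℝ) - 1) * (x - (j : ℝ))) = 0 := by linarith
    have hzero := (Finset.sum_eq_zero_iff_of_nonneg hterm_nonneg).1 hSzz
    have hpair : ∀ j, 2 ≤ j → j ≤ K - 1 → p (j + 1) = p j := by
      intro j h2j hjK
      have hjmem : j ∈ Finset.Icc 1 (K - 1) := by simp only [Finset.mem_Icc]; omega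
      have hz := hzero j hjmem
      have h2j' : (2 : ℝ) ≤ (j : ℝ) := by exact_mod_cast h2j
      have hjK' : (j : ℝ) + 1 ≤ x := by
        rw [hxdef]
        have : j + 1 ≤ K := by omega
        exact_mod_cast this
      have hΦpos : 0 < c / 3 * (j : ℝ) * ((j : ℝ) - 1) * (x - (j : ℝ)) := by
        apply mul_pos (mul_pos (mul_pos (by linarith) (by linarith)) (by linarith))
        linarith
      rcases mul_eq_zero.1 hz with h | h
      · linarith [sub_eq_zero.1 h]
      · exact absurd h (ne_of_gt hΦpos)
    have hallp : ∀ k, 2 ≤ k → k ≤ K → p k = p 2 := by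
      intro k
      induction k with
      | zero => intro h; omega
      | succ n ih =>
        intro hk2 hkK
        rcases Nat.lt_or_ge n 2 with h | h
        · have hn : n + 1 = 2 := by omega
          rw [hn]
        · rw [hpair n h (by omega)]; exact ih h (by omega)
    have hsumconst : ∑ k ∈ Finset.Icc 2 K, p k = (x - 1) * p 2 := by
      rw [Finset.sum_congr rfl
        (fun k hk => hallp k (Finset.mem_Icc.1 hk).1 (Finset.mem_Icc.1 hk).2),
        Finset.sum_const, Nat.card_Icc, nsmul_eq_mul, hxdef]
      have : ((K + 1 - 2 : ℕ) : ℝ) = (K : ℝ) - 1 := by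
        have h2 : K + 1 - 2 = K - 1 := by omega
        rw [h2]; push_cast [Nat.cast_sub (by omega : 1 ≤ K)]; ring
      rw [this]
    have heq1 : p 1 + (x - 1) * p 2 = 1 := by
      rw [hsplit, Finset.sum_insert h1notin, hsumconst] at hp1
      linarith
    have heqμ : p 1 + (x * (x + 1) / 2 - 1) * p 2 = m := by
      have hμsplit : μ = p 1 + (∑ k ∈ Finset.Icc 2 K, (k : ℝ) * p k) := by
        rw [hμdef, hsplit, Finset.sum_insert h1notin]; norm_num
      have : ∑ k ∈ Finset.Icc 2 K, (k : ℝ) * p k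
          = (∑ k ∈ Finset.Icc 2 K, (k : ℝ)) * p 2 := by
        rw [Finset.sum_mul]
        exact Finset.sum_congr rfl (fun k hk => by
          rw [hallp k (Finset.mem_Icc.1 hk).1 (Finset.mem_Icc.1 hk).2])
      rw [this, hsumk2] at hμsplit
      linarith [hmm, hμsplit]
    have hm' : m * (2 * x + 5) = 4 * (x + 1) := by
      rw [hmdef]; field_simp
    have hp2eq : p 2 * (x * (x - 1) * (2 * x + 5)) = 2 * (2 * x - 1) := by
      linear_combination 2 * (2 * x + 5) * heqμ - 2 * (2 * x + 5) * heq1 + 2 * hm'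
    have hp2 : p 2 = 2 * (2 * x - 1) / (x * (x - 1) * (2 * x + 5)) := by
      rw [eq_div_iff (ne_of_gt (mul_pos (mul_pos hxpos hx1) hden2))]
      exact hp2eq
    refine ⟨?_, ?_⟩
    · have hne : (2 * x ^ 2 + 5 * x) ≠ 0 := by nlinarith
      rw [eq_div_iff hne]
      linear_combination x * (2 * x + 5) * heq1 - hp2eq
    · intro k hk
      rw [hallp k (Finset.mem_Icc.1 hk).1 (Finset.mem_Icc.1 hk).2, hp2]
  · -- the explicit distribution attains equality
    rintro ⟨hq1, hq⟩
    have hμval : μ = p 1 + (x * (x + 1) / 2 - 1)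
        * (2 * (2 * x - 1) / (x * (x - 1) * (2 * x + 5))) := by
      rw [hμdef, hsplit, Finset.sum_insert h1notin,
        Finset.sum_congr rfl (fun k hk => by rw [hq k hk]),
        ← Finset.sum_mul, hsumk2]
      norm_num
    have hSval : S = p 1 + (x * (x + 1) * (2 * x + 1) / 6 - 1)
        * (2 * (2 * x - 1) / (x * (x - 1) * (2 * x + 5))) := by
      rw [hSdef, hsplit, Finset.sum_insert h1notin,
        Finset.sum_congr rfl (fun k hk => by rw [hq k hk]),
        ← Finset.sum_mul, hsumk2sq]
      norm_num
    rw [div_eq_iff (ne_of_gt hvar), hμval, hSval, hq1, hcdef]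
    have hne1 : x ≠ 0 := ne_of_gt hxpos
    have hne2 : x - 1 ≠ 0 := ne_of_gt hx1
    have hne3 : 2 * x + 5 ≠ 0 := ne_of_gt hden2
    have hne4 : 4 * x ^ 2 - 4 * x + 1 ≠ 0 := ne_of_gt hden
    have hne5 : 2 * x ^ 2 + 5 * x ≠ 0 := by nlinarith
    field_simp
    ring
end
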